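/- Fix integers ℓ ≥ 1 and k ≥ 1 and set N = k + 2ℓ + 1. Let x ∈ ℤ^ℓ be strictly dominant (x₁ > x₂ > ⋯ > x_ℓ ≥ 1) and regular (x_i + x_j ≢ 0 (mod N) for all i ≠ j, and 2x_i ≢ 0 (mod N) for all i), and assume x₁ < N. Then there exist an integer m with 1 ≤ m ≤ N and a sequence (i₁, …, i_m) of integers with 0 ≤ i_t ≤ ℓ for each t, such that y := w_{i_m} ∘ w_{i_{m−1}} ∘ ⋯ ∘ w_{i₁}(x) is strictly dominant (y₁ > y₂ > ⋯ > y_ℓ ≥ 1) and satisfies 2y₁ < N. -/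
import Mathlib


open BigOperators

/-- The generators of the affine Weyl group `W̊ ⋉ N ℤ^ℓ` acting on `ℤ^ℓ`
(coordinates `0`-indexed, so `x 0` is the first coordinate `x₁`):
`s₀ x = (N - x₁, x₂, …, x_ℓ)`; for `1 ≤ j ≤ ℓ - 1`, `s_j` transposes the
(1-indexed) coordinates `j` and `j+1`; `s_ℓ` negates the last coordinate. -/
def sRefl (ℓ : ℕ) (N : ℤ) (j : ℕ) (x : Fin ℓ → ℤ) : Fin ℓ → ℤ :=
  if j = 0 then
    fun i => if i.1 = 0 then N - x i else x i
  else if hj : j < ℓ then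
    fun i => if i.1 = j - 1 then x ⟨j, hj⟩
             else if i.1 = j then x ⟨j - 1, by omega⟩
             else x i
  else
    fun i => if i.1 = ℓ - 1 then - x i else x i

/-- The elements `w₀ = id` and `w_i = s_{i-1} s_{i-2} ⋯ s₁ s₀` for `i ≥ 1`. -/
def wElem (ℓ : ℕ) (N : ℤ) : ℕ → (Fin ℓ → ℤ) → (Fin ℓ → ℤ)
  | 0 => id
  | (i + 1) => fun x => sRefl ℓ N i (wElem ℓ N i x)

/-- A point `x ∈ ℤ^ℓ` is strictly dominant if `x₁ > x₂ > ⋯ > x_ℓ ≥ 1`. -/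
def StrictDom (ℓ : ℕ) (x : Fin ℓ → ℤ) : Prop :=
  (∀ i j : Fin ℓ, i < j → x j < x i) ∧ (∀ i : Fin ℓ, 1 ≤ x i)

/-- A point `x ∈ ℤ^ℓ` is regular (has trivial stabilizer in `W̊ ⋉ N ℤ^ℓ`) if
`x_i + x_j ≢ 0 (mod N)` for `i ≠ j` and `2 x_i ≢ 0 (mod N)` for all `i`. -/
def RegularPt (ℓ : ℕ) (N : ℤ) (x : Fin ℓ → ℤ) : Prop :=
  (∀ i j : Fin ℓ, i ≠ j → ¬ (N ∣ x i + x j)) ∧ (∀ i : Fin ℓ, ¬ (N ∣ 2 * x i))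

lemma wElem_apply (ℓ : ℕ) (N : ℤ) :
    ∀ (m : ℕ) (hm1 : 1 ≤ m) (hml : m ≤ ℓ) (x : Fin ℓ → ℤ) (p : Fin ℓ),
    wElem ℓ N m x p =
      if h : p.1 + 1 < m then x ⟨p.1 + 1, by omega⟩
      else if p.1 + 1 = m then N - x ⟨0, by omega⟩
      else x p := by
  intro m
  induction m with
  | zero => intro h; omega
  | succ m ih =>
    intro _ hml x p
    by_cases hm : m = 0
    · subst hm
      show sRefl ℓ N 0 (wElem ℓ N 0 x) p = _
      rcases p with ⟨pv, hp⟩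
      simp only [wElem, sRefl, id_eq, reduceIte]
      split_ifs <;>
        first
          | rfl
          | omega
          | (congr 1; apply Fin.ext; simp only [Fin.val_mk]; omega) | (congr <;> omega)
          
    · have h1m : 1 ≤ m := by omega
      have hmlt : m < ℓ := by omega
      show sRefl ℓ N m (wElem ℓ N m x) p = _
      simp only [sRefl, if_neg hm, dif_pos hmlt]
      rcases p with ⟨pv, hp⟩
      simp only [ih h1m (by omega)]
      split_ifs <;>
        first
          | rfl
          | omega
          | (congr 1; apply Fin.ext; simp only [Fin.val_mk]; omega) | (congr <;> omega)
          
lemma step_lemma (ℓ : ℕ) (N : ℤ) (hl : 0 < ℓ) (x : Fin ℓ → ℤ)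
    (hdom : StrictDom ℓ x) (hreg : RegularPt ℓ N x)
    (hx1 : x ⟨0, hl⟩ < N) (h2 : N < 2 * x ⟨0, hl⟩) :
    ∃ m : ℕ, 1 ≤ m ∧ m ≤ ℓ ∧
      StrictDom ℓ (wElem ℓ N m x) ∧ RegularPt ℓ N (wElem ℓ N m x) ∧
      wElem ℓ N m x ⟨0, hl⟩ < x ⟨0, hl⟩ := by
  obtain ⟨hlt, hpos⟩ := hdom
  obtain ⟨hsum, hdbl⟩ := hreg
  have hlt' : ∀ i j : Fin ℓ, i.1 < j.1 → x j < x i := by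
    intro i j h; exact hlt i j h
  set c : ℤ := N - x ⟨0, hl⟩ with hc
  have hxle : ∀ p : Fin ℓ, x p ≤ x ⟨0, hl⟩ := by
    intro p
    rcases Nat.eq_zero_or_pos p.1 with h | h
    · have hp : p = ⟨0, hl⟩ := Fin.ext h
      rw [hp]
    · exact le_of_lt (hlt' ⟨0, hl⟩ p h)
  have hxlt : ∀ p : Fin ℓ, 0 < p.1 → x p < x ⟨0, hl⟩ := fun p h => hlt' ⟨0, hl⟩ p h
  have hc0 : c < x ⟨0, hl⟩ := by omega
  have hc1 : 1 ≤ c := by omega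
  have hNpos : 0 < N := by have := hpos ⟨0, hl⟩; omega
  have hne : ∀ p : Fin ℓ, x p ≠ c := by
    intro p hpc
    rcases Nat.eq_zero_or_pos p.1 with h | h
    · have hp : p = ⟨0, hl⟩ := Fin.ext h
      rw [hp] at hpc; omega
    · refine hsum p ⟨0, hl⟩ (fun hpq => by simp only [Fin.ext_iff] at hpq; omega) ⟨1, by omega⟩
  classical
  set T : Finset (Fin ℓ) := Finset.univ.filter (fun p => c < x p) with hT
  have hTne : T.Nonempty := ⟨⟨0, hl⟩, by simp only [hT, Finset.mem_filter, Finset.mem_univ, true_and]; omega⟩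
  set pm : Fin ℓ := T.max' hTne with hpm
  have hpmT : pm ∈ T := T.max'_mem hTne
  have hpmc : c < x pm := by
    have := hpmT
    simp only [hT, Finset.mem_filter, Finset.mem_univ, true_and] at this
    exact this
  set m : ℕ := pm.1 + 1 with hm
  have hm1 : 1 ≤ m := by omega
  have hml : m ≤ ℓ := by have := pm.2; omega
  have hAbove : ∀ (a : ℕ) (ha : a < ℓ), a < m → c < x ⟨a, ha⟩ := by
    intro a ha hp
    rcases eq_or_lt_of_le (by omega : a ≤ pm.1) with h | h
    · have : (⟨a, ha⟩ : Fin ℓ) = pm := Fin.ext h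
      rw [this]; exact hpmc
    · exact lt_trans hpmc (hlt' ⟨a, ha⟩ pm h)
  have hBelow : ∀ (a : ℕ) (ha : a < ℓ), m ≤ a → x ⟨a, ha⟩ < c := by
    intro a ha hp
    have hpT : (⟨a, ha⟩ : Fin ℓ) ∉ T := by
      intro hpT
      have h1 := Finset.le_max' T _ hpT
      rw [← hpm] at h1
      have h2 : a ≤ pm.1 := h1
      omega
    have h3 : ¬ c < x ⟨a, ha⟩ := by
      intro h4
      exact hpT (by simp only [hT, Finset.mem_filter, Finset.mem_univ, true_and]; exact h4)
    have := hne ⟨a, ha⟩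
    omega
  have hlt2 : ∀ (a b : ℕ) (ha : a < ℓ) (hb : b < ℓ), a < b → x ⟨b, hb⟩ < x ⟨a, ha⟩ :=
    fun a b ha hb h => hlt' ⟨a, ha⟩ ⟨b, hb⟩ h
  have key : ∀ (a : ℕ) (ha : a < ℓ), 0 < a → ¬ N ∣ c + x ⟨a, ha⟩ := by
    intro a ha h0 hd
    have hdd : N ∣ x ⟨a, ha⟩ - x ⟨0, hl⟩ := by
      have h5 := dvd_sub hd (dvd_refl N)
      have h6 : c + x ⟨a, ha⟩ - N = x ⟨a, ha⟩ - x ⟨0, hl⟩ := by rw [hc]; ring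
      rwa [h6] at h5
    have hb1 : x ⟨a, ha⟩ < x ⟨0, hl⟩ := hxlt ⟨a, ha⟩ h0
    have hb2 : 1 ≤ x ⟨a, ha⟩ := hpos ⟨a, ha⟩
    have := Int.eq_zero_of_abs_lt_dvd hdd (by rw [abs_lt]; constructor <;> omega)
    omega
  have hkey2 : ¬ N ∣ 2 * c := by
    intro hd
    refine hdbl ⟨0, hl⟩ ?_
    have h1 : N ∣ 2 * N - 2 * c := dvd_sub ⟨2, by ring⟩ hd
    have h6 : 2 * N - 2 * c = 2 * x ⟨0, hl⟩ := by rw [hc]; ring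
    rwa [h6] at h1
  have hy : ∀ p : Fin ℓ, wElem ℓ N m x p =
      if h : p.1 + 1 < m then x ⟨p.1 + 1, by omega⟩
      else if p.1 + 1 = m then c
      else x p := by
    intro p
    rw [wElem_apply ℓ N m hm1 hml x p]
  refine ⟨m, hm1, hml, ⟨?_, ?_⟩, ⟨?_, ?_⟩, ?_⟩
  · -- strictly decreasing
    rintro ⟨iv, hiv⟩ ⟨jv, hjv⟩ hij
    have hij' : iv < jv := hij
    have e1 : (⟨iv, hiv⟩ : Fin ℓ).1 = iv := rfl
    have e2 : (⟨jv, hjv⟩ : Fin ℓ).1 = jv := rfl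
    rw [hy ⟨iv, hiv⟩, hy ⟨jv, hjv⟩]
    split_ifs
    all_goals
      first
        | omega
        | exact hlt2 _ _ (by omega) (by omega) (by omega)
        | exact hAbove _ (by omega) (by omega)
        | exact hBelow _ (by omega) (by omega)
  · -- positivity
    intro i
    rw [hy i]
    split_ifs
    · exact hpos _
    · exact hc1
    · exact hpos i
  · -- regularity: sums
    rintro ⟨iv, hiv⟩ ⟨jv, hjv⟩ hij
    have hij' : iv ≠ jv := fun h => hij (Fin.ext h)
    have e1 : (⟨iv, hiv⟩ : Fin ℓ).1 = iv := rfl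
    have e2 : (⟨jv, hjv⟩ : Fin ℓ).1 = jv := rfl
    rw [hy ⟨iv, hiv⟩, hy ⟨jv, hjv⟩]
    simp only [Fin.val_mk]
    split_ifs with f1 f2 f3 f4 f5 f6 f7 f8 f9 f10 f11 f12 f13 f14 f15 f16
    · exact hsum _ _ (by simp only [ne_eq, Fin.mk.injEq]; omega)
    · intro hd
      rw [add_comm] at hd
      exact key _ (by omega) (by omega) hd
    · exact hsum _ _ (by simp only [ne_eq, Fin.mk.injEq]; omega)
    · exact key _ (by omega) (by omega)
    · exfalso
      omega
    · exact key _ (by omega) (by omega)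
    · exact hsum _ _ (by simp only [ne_eq, Fin.mk.injEq]; omega)
    · intro hd
      rw [add_comm] at hd
      exact key _ (by omega) (by omega) hd
    · exact hsum _ _ (by simp only [ne_eq, Fin.mk.injEq]; omega)
  · -- regularity: doubles
    intro i
    rw [hy i]
    split_ifs
    · exact hdbl _
    · exact hkey2
    · exact hdbl i
  · -- decrease
    rw [hy ⟨0, hl⟩]
    simp only [Fin.val_mk]
    split_ifs with h1 h2'
    · exact hlt2 0 1 hl (by omega) (by omega)
    · exact hc0
    · omega

lemma main_aux (ℓ : ℕ) (N : ℤ) (hl : 0 < ℓ) :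
    ∀ n : ℕ, ∀ x : Fin ℓ → ℤ, StrictDom ℓ x → RegularPt ℓ N x →
      x ⟨0, hl⟩ < N → (x ⟨0, hl⟩).toNat ≤ n →
      ∃ L : List ℕ, 1 ≤ L.length ∧ (L.length : ℤ) ≤ x ⟨0, hl⟩ ∧ (∀ t ∈ L, t ≤ ℓ) ∧
        StrictDom ℓ (L.foldl (fun v i => wElem ℓ N i v) x) ∧
        2 * (L.foldl (fun v i => wElem ℓ N i v) x) ⟨0, hl⟩ < N := by
  intro n
  induction n with
  | zero => intro x hdom _ _ hto; have := hdom.2 ⟨0, hl⟩; omega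
  | succ n ih =>
    intro x hdom hreg hx1 hto
    by_cases hcase : 2 * x ⟨0, hl⟩ < N
    · refine ⟨[0], by simp, ?_, by simp, ?_, ?_⟩
      · have := hdom.2 ⟨0, hl⟩; simp; omega
      · simpa [wElem] using hdom
      · simpa [wElem] using hcase
    · have hne2 : 2 * x ⟨0, hl⟩ ≠ N := by
        intro h
        exact hreg.2 ⟨0, hl⟩ (h ▸ dvd_refl N)
      have h2 : N < 2 * x ⟨0, hl⟩ := by omega
      obtain ⟨m, hm1, hml, hdom', hreg', hdec⟩ := step_lemma ℓ N hl x hdom hreg hx1 h2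
      have hy1 : wElem ℓ N m x ⟨0, hl⟩ < N := lt_trans hdec hx1
      have hto' : (wElem ℓ N m x ⟨0, hl⟩).toNat ≤ n := by
        have := hdom'.2 ⟨0, hl⟩
        have := hdom.2 ⟨0, hl⟩
        omega
      obtain ⟨L, hL1, hL2, hL3, hL4, hL5⟩ := ih (wElem ℓ N m x) hdom' hreg' hy1 hto'
      refine ⟨m :: L, by simp, ?_, ?_, ?_, ?_⟩
      · simp only [List.length_cons]
        push_cast
        omega
      · intro t ht
        rcases List.mem_cons.1 ht with h | h
        · omega
        · exact hL3 t h
      · rw [List.foldl_cons]; exact hL4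
      · rw [List.foldl_cons]; exact hL5


/-- The alcove algorithm for `A₂ℓ⁽²⁾`: with `N = k + 2ℓ + 1`, every strictly
dominant regular point `x ∈ ℤ^ℓ` with `x₁ < N` can be moved, by applying at
most `N` of the elements `w₀, …, w_ℓ`, to a strictly dominant point `y` with
`2 y₁ < N`. -/
theorem alcove_algorithm (ℓ k : ℕ) (hl : 1 ≤ ℓ) (hk : 1 ≤ k)
    (x : Fin ℓ → ℤ)
    (hdom : StrictDom ℓ x)
    (hreg : RegularPt ℓ ((k : ℤ) + 2 * ℓ + 1) x)
    (hx1 : x ⟨0, by omega⟩ < (k : ℤ) + 2 * ℓ + 1) :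
    ∃ L : List ℕ, 1 ≤ L.length ∧ (L.length : ℤ) ≤ (k : ℤ) + 2 * ℓ + 1 ∧
      (∀ t ∈ L, t ≤ ℓ) ∧
      StrictDom ℓ (L.foldl (fun v i => wElem ℓ ((k : ℤ) + 2 * ℓ + 1) i v) x) ∧
      2 * (L.foldl (fun v i => wElem ℓ ((k : ℤ) + 2 * ℓ + 1) i v) x) ⟨0, by omega⟩
        < (k : ℤ) + 2 * ℓ + 1 := by
  obtain ⟨L, h1, h2, h3, h4, h5⟩ :=
    main_aux ℓ ((k : ℤ) + 2 * ℓ + 1) (by omega) (x ⟨0, by omega⟩).toNat x hdom hreg hx1 le_rfl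
  exact ⟨L, h1, by omega, h3, h4, h5⟩
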